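/- Let N ≥ 2, C₁ > 0, and set C₂ := 2C₁ and C := C₁. For z = (z¹,…,zᴺ) ∈ (ℝ²)ᴺ with pairwise distinct components and 1 ≤ i ≤ N define F^{N,i}(z) := |z^i|²/8 + (C₁/(N−1)²) ∑_{j≠i} ∑_{k≠i,j} 2(|z^i−z^j|²|z^i−z^k|² − ⟨z^i−z^j, z^i−z^k⟩²)/(|z^i−z^j|²|z^i−z^k|²|z^j−z^k|²) + (C₂/(N−1)²) ∑_{k≠i} 1/|z^i − z^k|², and F^N(z) := ‖z‖²/8 + C ∑_{i=1}^N |(1/(N−1)) ∑_{k≠i} (z^i − z^k)/|z^i − z^k|²|². Then for every 1 ≤ i ≤ N, every z with pairwise distinct components, and every y ∈ ℝ² such that the vector z′ obtained from z by replacing the i-th component with y also has pairwise distinct components, one has F^N(z′) − F^N(z) = F^{N,i}(z′) − F^{N,i}(z). -/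

import Mathlib

open Finset RealInnerProductSpace

private lemma alg_tri (U V p : ℝ) (hU : U ≠ 0) (hV : V ≠ 0) (hW : U + V - 2 * p ≠ 0) :
    U⁻¹ * (V⁻¹ * p) + U⁻¹ * ((U + V - 2 * p)⁻¹ * (U - p))
      + (U + V - 2 * p)⁻¹ * (V⁻¹ * (V - p))
    = 2 * (U * V - p ^ 2) / (U * V * (U + V - 2 * p)) := by
  have hp : p = (U + V - (U + V - 2 * p)) / 2 := by ring
  generalize U + V - 2 * p = W at *
  subst hp
  field_simp
  ring

private lemma tri_identity (a b c : EuclideanSpace ℝ (Fin 2)) (hab : a ≠ b) (hac : a ≠ c)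
    (hbc : b ≠ c) :
    (‖a - b‖ ^ 2)⁻¹ * ((‖a - c‖ ^ 2)⁻¹ * ⟪a - b, a - c⟫)
      + (‖b - a‖ ^ 2)⁻¹ * ((‖b - c‖ ^ 2)⁻¹ * ⟪b - a, b - c⟫)
      + (‖c - b‖ ^ 2)⁻¹ * ((‖c - a‖ ^ 2)⁻¹ * ⟪c - b, c - a⟫)
    = 2 * (‖a - b‖ ^ 2 * ‖a - c‖ ^ 2 - ⟪a - b, a - c⟫ ^ 2)
        / (‖a - b‖ ^ 2 * ‖a - c‖ ^ 2 * ‖b - c‖ ^ 2) := by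
  have hU : ‖a - b‖ ^ 2 ≠ 0 := pow_ne_zero _ (norm_ne_zero_iff.mpr (sub_ne_zero.mpr hab))
  have hV : ‖a - c‖ ^ 2 ≠ 0 := pow_ne_zero _ (norm_ne_zero_iff.mpr (sub_ne_zero.mpr hac))
  have hW0 : ‖b - c‖ ^ 2 ≠ 0 := pow_ne_zero _ (norm_ne_zero_iff.mpr (sub_ne_zero.mpr hbc))
  have hW : ‖b - c‖ ^ 2 = ‖a - b‖ ^ 2 + ‖a - c‖ ^ 2 - 2 * ⟪a - b, a - c⟫ := by
    have h : b - c = (a - c) - (a - b) := by abel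
    rw [h, norm_sub_sq_real, real_inner_comm]; ring
  have h1 : ‖b - a‖ ^ 2 = ‖a - b‖ ^ 2 := by rw [norm_sub_rev]
  have h2 : ‖c - b‖ ^ 2 = ‖b - c‖ ^ 2 := by rw [norm_sub_rev]
  have h3 : ‖c - a‖ ^ 2 = ‖a - c‖ ^ 2 := by rw [norm_sub_rev]
  have h4 : ⟪b - a, b - c⟫ = ‖a - b‖ ^ 2 - ⟪a - b, a - c⟫ := by
    have e1 : b - a = -(a - b) := by abel
    have e2 : b - c = (a - c) - (a - b) := by abel
    rw [e1, e2, inner_neg_left, inner_sub_right, real_inner_self_eq_norm_sq]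
    ring
  have h5 : ⟪c - b, c - a⟫ = ‖a - c‖ ^ 2 - ⟪a - b, a - c⟫ := by
    have e1 : c - b = (a - b) - (a - c) := by abel
    have e2 : c - a = -(a - c) := by abel
    rw [e1, e2, inner_neg_right, inner_sub_left, real_inner_self_eq_norm_sq,
      real_inner_comm]
    ring
  rw [h1, h2, h3, h4, h5, hW]
  exact alg_tri _ _ _ hU hV (by rw [← hW]; exact hW0)

private lemma erase_swap' {N : ℕ} (i l : Fin N) :
    ((univ : Finset (Fin N)).erase l).erase i = ((univ : Finset (Fin N)).erase i).erase l := by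
  ext x; simp [Finset.mem_erase]; tauto

private lemma erase_swap'' {N : ℕ} (i l k : Fin N) :
    (((univ : Finset (Fin N)).erase l).erase k).erase i
      = (((univ : Finset (Fin N)).erase i).erase l).erase k := by
  ext x; simp [Finset.mem_erase]; tauto

private lemma pair_split {N : ℕ} (i : Fin N) (f : Fin N → Fin N → ℝ)
    (hf : ∀ a b, f a b = f b a) :
    ∑ l, ∑ k ∈ univ.erase l, f l k
    = 2 * (∑ k ∈ univ.erase i, f i k)
      + ∑ l ∈ univ.erase i, ∑ k ∈ (univ.erase i).erase l, f l k := by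
  rw [← Finset.add_sum_erase _ _ (mem_univ i)]
  have h : ∀ l ∈ univ.erase i, ∑ k ∈ univ.erase l, f l k
      = f l i + ∑ k ∈ (univ.erase i).erase l, f l k := by
    intro l hl
    have hli : l ≠ i := (mem_erase.mp hl).1
    have hi : i ∈ univ.erase l := mem_erase.mpr ⟨hli.symm, mem_univ i⟩
    rw [← Finset.add_sum_erase _ _ hi, erase_swap']
  rw [sum_congr rfl h, sum_add_distrib]
  have h2 : ∑ l ∈ univ.erase i, f l i = ∑ l ∈ univ.erase i, f i l :=
    sum_congr rfl fun l _ => hf l i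
  rw [h2]; ring

private lemma double_swap {N : ℕ} (s : Finset (Fin N)) (g : Fin N → Fin N → ℝ) :
    ∑ l ∈ s, ∑ k ∈ s.erase l, g l k = ∑ k ∈ s, ∑ l ∈ s.erase k, g l k := by
  refine Finset.sum_comm' ?_
  intro x y
  simp only [Finset.mem_erase]
  tauto

private lemma triple_split {N : ℕ} (i : Fin N) (t : Fin N → Fin N → Fin N → ℝ) :
    ∑ l, ∑ k ∈ univ.erase l, ∑ m ∈ (univ.erase l).erase k, t l k m
    = ∑ j ∈ univ.erase i, ∑ k ∈ (univ.erase i).erase j, (t i j k + t j i k + t k j i)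
      + ∑ l ∈ univ.erase i, ∑ k ∈ (univ.erase i).erase l,
          ∑ m ∈ ((univ.erase i).erase l).erase k, t l k m := by
  rw [← Finset.add_sum_erase _ _ (mem_univ i)]
  have h : ∀ l ∈ univ.erase i,
      ∑ k ∈ univ.erase l, ∑ m ∈ (univ.erase l).erase k, t l k m
      = (∑ m ∈ (univ.erase i).erase l, t l i m)
        + ((∑ k ∈ (univ.erase i).erase l, t l k i)
          + ∑ k ∈ (univ.erase i).erase l,
              ∑ m ∈ ((univ.erase i).erase l).erase k, t l k m) := by
    intro l hl
    have hli : l ≠ i := (mem_erase.mp hl).1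
    have hi : i ∈ univ.erase l := mem_erase.mpr ⟨hli.symm, mem_univ i⟩
    rw [← Finset.add_sum_erase _ _ hi, erase_swap']
    congr 1
    have h2 : ∀ k ∈ (univ.erase i).erase l,
        ∑ m ∈ (univ.erase l).erase k, t l k m
        = t l k i + ∑ m ∈ (((univ.erase i).erase l)).erase k, t l k m := by
      intro k hk
      have hki : k ≠ i := (mem_erase.mp ((erase_swap' i l) ▸ hk)).1
      have hkl : k ≠ l := (mem_erase.mp hk).1
      have hi2 : i ∈ (univ.erase l).erase k :=
        mem_erase.mpr ⟨hki.symm, mem_erase.mpr ⟨hli.symm, mem_univ i⟩⟩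
      rw [← Finset.add_sum_erase _ _ hi2, erase_swap'' i l k]
    rw [sum_congr rfl h2, sum_add_distrib]
  rw [sum_congr rfl h, sum_add_distrib, sum_add_distrib]
  have hswap : ∑ l ∈ univ.erase i, ∑ k ∈ (univ.erase i).erase l, t l k i
      = ∑ j ∈ univ.erase i, ∑ k ∈ (univ.erase i).erase j, t k j i :=
    double_swap _ _
  rw [hswap]
  simp only [sum_add_distrib]
  ring

private lemma key (N : ℕ) (C₁ : ℝ) (i : Fin N)
    (z : Fin N → EuclideanSpace ℝ (Fin 2)) (hz : Function.Injective z) :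
    (∑ l, ‖z l‖ ^ 2) / 8
      + C₁ * ∑ l, ‖(((N : ℝ) - 1)⁻¹) •
          ∑ k ∈ univ.erase l, (‖z l - z k‖ ^ 2)⁻¹ • (z l - z k)‖ ^ 2
    = (‖z i‖ ^ 2 / 8
      + C₁ / ((N : ℝ) - 1) ^ 2 *
          ∑ j ∈ univ.erase i, ∑ k ∈ (univ.erase i).erase j,
            2 * (‖z i - z j‖ ^ 2 * ‖z i - z k‖ ^ 2 - ⟪z i - z j, z i - z k⟫ ^ 2)
              / (‖z i - z j‖ ^ 2 * ‖z i - z k‖ ^ 2 * ‖z j - z k‖ ^ 2)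
      + 2 * C₁ / ((N : ℝ) - 1) ^ 2 * ∑ k ∈ univ.erase i, (‖z i - z k‖ ^ 2)⁻¹)
      + ((∑ l ∈ univ.erase i, ‖z l‖ ^ 2) / 8
        + C₁ / ((N : ℝ) - 1) ^ 2 * ∑ l ∈ univ.erase i, ∑ k ∈ (univ.erase i).erase l,
            (‖z l - z k‖ ^ 2)⁻¹
        + C₁ / ((N : ℝ) - 1) ^ 2 * ∑ l ∈ univ.erase i, ∑ k ∈ (univ.erase i).erase l,
            ∑ m ∈ ((univ.erase i).erase l).erase k,
              (‖z l - z k‖ ^ 2)⁻¹ * ((‖z l - z m‖ ^ 2)⁻¹ * ⟪z l - z k, z l - z m⟫)) := by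
  have hne : ∀ {a b : Fin N}, a ≠ b → ‖z a - z b‖ ^ 2 ≠ 0 := fun h =>
    pow_ne_zero _ (norm_ne_zero_iff.mpr (sub_ne_zero.mpr (fun e => h (hz e))))
  have expand : ∀ l : Fin N,
      ‖(((N : ℝ) - 1)⁻¹) • ∑ k ∈ univ.erase l, (‖z l - z k‖ ^ 2)⁻¹ • (z l - z k)‖ ^ 2
      = (((N : ℝ) - 1) ^ 2)⁻¹ * ((∑ k ∈ univ.erase l, (‖z l - z k‖ ^ 2)⁻¹)
          + ∑ k ∈ univ.erase l, ∑ m ∈ (univ.erase l).erase k,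
              (‖z l - z k‖ ^ 2)⁻¹ * ((‖z l - z m‖ ^ 2)⁻¹ * ⟪z l - z k, z l - z m⟫)) := by
    intro l
    rw [norm_smul, mul_pow, Real.norm_eq_abs, sq_abs, inv_pow]
    congr 1
    have hv : ‖∑ k ∈ univ.erase l, (‖z l - z k‖ ^ 2)⁻¹ • (z l - z k)‖ ^ 2
        = ∑ k ∈ univ.erase l, ∑ m ∈ univ.erase l,
            (‖z l - z k‖ ^ 2)⁻¹ * ((‖z l - z m‖ ^ 2)⁻¹ * ⟪z l - z k, z l - z m⟫) := by
      rw [← real_inner_self_eq_norm_sq, sum_inner]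
      refine sum_congr rfl fun k _ => ?_
      rw [inner_sum]
      refine sum_congr rfl fun m _ => ?_
      rw [real_inner_smul_left, real_inner_smul_right]
    rw [hv, ← sum_add_distrib]
    refine sum_congr rfl fun k hk => ?_
    rw [← Finset.add_sum_erase _ _ hk]
    congr 1
    have hkl : k ≠ l := (mem_erase.mp hk).1
    rw [real_inner_self_eq_norm_sq, inv_mul_cancel₀ (hne hkl.symm), mul_one]
  simp only [expand]
  rw [← Finset.mul_sum, sum_add_distrib]
  rw [pair_split i (fun a b => (‖z a - z b‖ ^ 2)⁻¹)
    (by intro a b; show (‖z a - z b‖ ^ 2)⁻¹ = (‖z b - z a‖ ^ 2)⁻¹; rw [norm_sub_rev])]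
  rw [triple_split i
    (fun a b c => (‖z a - z b‖ ^ 2)⁻¹ * ((‖z a - z c‖ ^ 2)⁻¹ * ⟪z a - z b, z a - z c⟫))]
  have hK : ∑ j ∈ univ.erase i, ∑ k ∈ (univ.erase i).erase j,
      ((‖z i - z j‖ ^ 2)⁻¹ * ((‖z i - z k‖ ^ 2)⁻¹ * ⟪z i - z j, z i - z k⟫)
        + (‖z j - z i‖ ^ 2)⁻¹ * ((‖z j - z k‖ ^ 2)⁻¹ * ⟪z j - z i, z j - z k⟫)
        + (‖z k - z j‖ ^ 2)⁻¹ * ((‖z k - z i‖ ^ 2)⁻¹ * ⟪z k - z j, z k - z i⟫))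
      = ∑ j ∈ univ.erase i, ∑ k ∈ (univ.erase i).erase j,
          2 * (‖z i - z j‖ ^ 2 * ‖z i - z k‖ ^ 2 - ⟪z i - z j, z i - z k⟫ ^ 2)
            / (‖z i - z j‖ ^ 2 * ‖z i - z k‖ ^ 2 * ‖z j - z k‖ ^ 2) := by
    refine sum_congr rfl fun j hj => sum_congr rfl fun k hk => ?_
    have hji : j ≠ i := (mem_erase.mp hj).1
    have hkj : k ≠ j := (mem_erase.mp hk).1
    have hki : k ≠ i := (mem_erase.mp (mem_of_mem_erase hk)).1
    exact tri_identity (z i) (z j) (z k) (fun e => hji (hz e).symm)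
      (fun e => hki (hz e).symm) (fun e => hkj (hz e).symm)
  rw [hK, ← Finset.add_sum_erase _ (fun l => ‖z l‖ ^ 2) (mem_univ i)]
  ring

/-- Lemma `2dpotentialgame`: with `C = C₁ = C₂/2`, the open loop Coulomb game is a
potential game at the level of the state costs: a unilateral deviation of player `i`
changes the global cost `F^N` by exactly the change in player `i`'s cost `F^{N,i}`. -/
theorem coulomb_potential_structure (N : ℕ) (hN : 2 ≤ N) (C₁ : ℝ) (hC₁ : 0 < C₁)
    (C₂ C : ℝ) (hC₂ : C₂ = 2 * C₁) (hC : C = C₁)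
    (F : Fin N → (Fin N → EuclideanSpace ℝ (Fin 2)) → ℝ)
    (hF : ∀ i z, F i z = ‖z i‖ ^ 2 / 8
      + C₁ / ((N : ℝ) - 1) ^ 2 *
          ∑ j ∈ univ.erase i, ∑ k ∈ (univ.erase i).erase j,
            2 * (‖z i - z j‖ ^ 2 * ‖z i - z k‖ ^ 2 - ⟪z i - z j, z i - z k⟫ ^ 2)
              / (‖z i - z j‖ ^ 2 * ‖z i - z k‖ ^ 2 * ‖z j - z k‖ ^ 2)
      + C₂ / ((N : ℝ) - 1) ^ 2 * ∑ k ∈ univ.erase i, (‖z i - z k‖ ^ 2)⁻¹)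
    (G : (Fin N → EuclideanSpace ℝ (Fin 2)) → ℝ)
    (hG : ∀ z, G z = (∑ l, ‖z l‖ ^ 2) / 8
      + C * ∑ l, ‖(((N : ℝ) - 1)⁻¹) •
          ∑ k ∈ univ.erase l, (‖z l - z k‖ ^ 2)⁻¹ • (z l - z k)‖ ^ 2)
    (i : Fin N) (z : Fin N → EuclideanSpace ℝ (Fin 2))
    (hz : Function.Injective z) (y : EuclideanSpace ℝ (Fin 2))
    (hz' : Function.Injective (Function.update z i y)) :
    G (Function.update z i y) - G z = F i (Function.update z i y) - F i z := by
  rw [hG, hG, hF, hF, hC₂, hC]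
  have h1 := key N C₁ i z hz
  have h2 := key N C₁ i (Function.update z i y) hz'
  have hupd : ∀ l ∈ (univ : Finset (Fin N)).erase i, Function.update z i y l = z l :=
    fun l hl => Function.update_of_ne (mem_erase.mp hl).1 _ _
  have hR1 : ∑ l ∈ univ.erase i, ‖Function.update z i y l‖ ^ 2
      = ∑ l ∈ univ.erase i, ‖z l‖ ^ 2 :=
    sum_congr rfl fun l hl => by rw [hupd l hl]
  have hR2 : ∑ l ∈ univ.erase i, ∑ k ∈ (univ.erase i).erase l,
        (‖Function.update z i y l - Function.update z i y k‖ ^ 2)⁻¹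
      = ∑ l ∈ univ.erase i, ∑ k ∈ (univ.erase i).erase l, (‖z l - z k‖ ^ 2)⁻¹ :=
    sum_congr rfl fun l hl => sum_congr rfl fun k hk => by
      rw [hupd l hl, hupd k (mem_of_mem_erase hk)]
  have hR3 : ∑ l ∈ univ.erase i, ∑ k ∈ (univ.erase i).erase l,
        ∑ m ∈ ((univ.erase i).erase l).erase k,
          (‖Function.update z i y l - Function.update z i y k‖ ^ 2)⁻¹ *
            ((‖Function.update z i y l - Function.update z i y m‖ ^ 2)⁻¹ *
              ⟪Function.update z i y l - Function.update z i y k,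
                Function.update z i y l - Function.update z i y m⟫)
      = ∑ l ∈ univ.erase i, ∑ k ∈ (univ.erase i).erase l,
          ∑ m ∈ ((univ.erase i).erase l).erase k,
            (‖z l - z k‖ ^ 2)⁻¹ * ((‖z l - z m‖ ^ 2)⁻¹ * ⟪z l - z k, z l - z m⟫) :=
    sum_congr rfl fun l hl => sum_congr rfl fun k hk => sum_congr rfl fun m hm => by
      rw [hupd l hl, hupd k (mem_of_mem_erase hk),
        hupd m (mem_of_mem_erase (mem_of_mem_erase hm))]
  rw [hR1, hR2, hR3] at h2
  linear_combination h2 - h1
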